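/- Let α > 4 and set s₊ = (α + 3√(α(α−4)))/(4α) and s₋ = (α − 3√(α(α−4)))/(4α). Then s₊ and s₋ lie in the interval (−1/2, 1), and each s ∈ {s₊, s₋} satisfies the stationarity equation −1/(2s + 1) + 1/(1 − s) − (2α/3) s = 0; equivalently, s₀ = 0, s₊, s₋ are exactly the roots of s(4α s² − 2α s + 9 − 2α) = 0. Consequently, for α > 4 the points q = s·(2/3, −1/3, −1/3) with s ∈ {0, s₊, s₋} are critical points of the quasi-entropy bulk energy F̂_b(q) = −(1/2) Σᵢ ln(qᵢ + 1/3) − (α/2) Σᵢ qᵢ² restricted to the plane q₁ + q₂ + q₃ = 0. -/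

import Mathlib

open Real

/-- For `α > 4`, the numbers `s₊ = (α + 3√(α(α−4)))/(4α)` and
`s₋ = (α − 3√(α(α−4)))/(4α)` lie in `(−1/2, 1)`, satisfy the stationarity
equation `−1/(2s+1) + 1/(1−s) − (2α/3)s = 0`; equivalently `0, s₊, s₋` are
exactly the roots of `s(4αs² − 2αs + 9 − 2α) = 0`. Consequently the points
`q = s·(2/3, −1/3, −1/3)` with `s ∈ {0, s₊, s₋}` are critical points of the
quasi-entropy bulk energy restricted to the plane `q₁ + q₂ + q₃ = 0`
(i.e. they satisfy the Lagrange condition `−1/(2(qᵢ+1/3)) − α qᵢ = λ`). -/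
theorem quasi_entropy_uniaxial_stationary_points (α sp sm : ℝ) (hα : 4 < α)
    (hsp : sp = (α + 3 * Real.sqrt (α * (α - 4))) / (4 * α))
    (hsm : sm = (α - 3 * Real.sqrt (α * (α - 4))) / (4 * α)) :
    sp ∈ Set.Ioo (-(1/2) : ℝ) 1 ∧ sm ∈ Set.Ioo (-(1/2) : ℝ) 1 ∧
    (∀ s ∈ ({sp, sm} : Set ℝ),
      -1 / (2 * s + 1) + 1 / (1 - s) - (2 * α / 3) * s = 0) ∧
    (∀ s : ℝ, s * (4 * α * s ^ 2 - 2 * α * s + 9 - 2 * α) = 0 ↔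
      s = 0 ∨ s = sp ∨ s = sm) ∧
    (∀ s ∈ ({0, sp, sm} : Set ℝ), ∃ lam : ℝ, ∀ i : Fin 3,
      -1 / (2 * ((![2 * s / 3, -s / 3, -s / 3] : Fin 3 → ℝ) i + 1/3))
        - α * (![2 * s / 3, -s / 3, -s / 3] : Fin 3 → ℝ) i = lam) := by
  have hα0 : (0:ℝ) < α := by linarith
  have h4α : (0:ℝ) < 4 * α := by linarith
  set d := Real.sqrt (α * (α - 4)) with hd
  have hd0 : 0 ≤ d := Real.sqrt_nonneg _
  have hd2 : d ^ 2 = α * (α - 4) := Real.sq_sqrt (by nlinarith)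
  have hdlt : d < α := by nlinarith
  -- linear characterizations
  have hsp' : 4 * α * sp = α + 3 * d := by rw [hsp]; field_simp
  have hsm' : 4 * α * sm = α - 3 * d := by rw [hsm]; field_simp
  -- quadratic roots
  have hqp : 4 * α * sp ^ 2 - 2 * α * sp + 9 - 2 * α = 0 := by
    have h : 4 * α * (4 * α * sp ^ 2 - 2 * α * sp + 9 - 2 * α) = 0 := by
      linear_combination (4 * α * sp - α + 3 * d) * hsp' + 9 * hd2
    rcases mul_eq_zero.mp h with h | h
    · linarith
    · linarith
  have hqm : 4 * α * sm ^ 2 - 2 * α * sm + 9 - 2 * α = 0 := by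
    have h : 4 * α * (4 * α * sm ^ 2 - 2 * α * sm + 9 - 2 * α) = 0 := by
      linear_combination (4 * α * sm - α - 3 * d) * hsm' + 9 * hd2
    rcases mul_eq_zero.mp h with h | h
    · linarith
    · linarith
  -- interval membership
  have hspI : sp ∈ Set.Ioo (-(1/2) : ℝ) 1 := by
    rw [hsp, Set.mem_Ioo]
    constructor
    · rw [lt_div_iff₀ h4α]; nlinarith
    · rw [div_lt_iff₀ h4α]; nlinarith
  have hsmI : sm ∈ Set.Ioo (-(1/2) : ℝ) 1 := by
    rw [hsm, Set.mem_Ioo]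
    constructor
    · rw [lt_div_iff₀ h4α]; nlinarith
    · rw [div_lt_iff₀ h4α]; nlinarith
  -- stationarity from membership + quadratic
  have stat : ∀ s : ℝ, s ∈ Set.Ioo (-(1/2) : ℝ) 1 →
      4 * α * s ^ 2 - 2 * α * s + 9 - 2 * α = 0 →
      -1 / (2 * s + 1) + 1 / (1 - s) - (2 * α / 3) * s = 0 := by
    intro s hs hq
    have h1 : 2 * s + 1 ≠ 0 := by rcases hs with ⟨h, _⟩; intro he; simp at h; linarith
    have h2 : 1 - s ≠ 0 := by rcases hs with ⟨_, h⟩; intro he; linarith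
    field_simp
    linear_combination s * hq
  -- Lagrange multiplier helper
  have lag : ∀ s : ℝ, 2 * s + 1 ≠ 0 → 1 - s ≠ 0 →
      s * (4 * α * s ^ 2 - 2 * α * s + 9 - 2 * α) = 0 →
      ∃ lam : ℝ, ∀ i : Fin 3,
      -1 / (2 * ((![2 * s / 3, -s / 3, -s / 3] : Fin 3 → ℝ) i + 1/3))
        - α * (![2 * s / 3, -s / 3, -s / 3] : Fin 3 → ℝ) i = lam := by
    intro s h1 h2 hq
    have h6 : (6:ℝ) - s * 6 ≠ 0 := fun h => h2 (by linarith)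
    have h6' : (2:ℝ) + s * 4 ≠ 0 := fun h => h1 (by linarith)
    refine ⟨-3 / (2 * (1 - s)) + α * s / 3, ?_⟩
    intro i
    fin_cases i
    · show -1 / (2 * (2*s/3 + 1/3)) - α * (2*s/3) = -3 / (2 * (1 - s)) + α * s / 3
      field_simp
      linear_combination 3 * hq
    · show -1 / (2 * (-s/3 + 1/3)) - α * (-s/3) = -3 / (2 * (1 - s)) + α * s / 3
      rw [show 2 * (-s/3 + 1/3) = 2*(1-s)/3 by ring, div_div_eq_mul_div, neg_one_mul]
      ring
    · show -1 / (2 * (-s/3 + 1/3)) - α * (-s/3) = -3 / (2 * (1 - s)) + α * s / 3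
      rw [show 2 * (-s/3 + 1/3) = 2*(1-s)/3 by ring, div_div_eq_mul_div, neg_one_mul]
      ring
  have hsp1 : 2 * sp + 1 ≠ 0 := by
    rcases hspI with ⟨h, _⟩; intro he; simp at h; linarith
  have hsp2 : 1 - sp ≠ 0 := by rcases hspI with ⟨_, h⟩; intro he; linarith
  have hsm1 : 2 * sm + 1 ≠ 0 := by
    rcases hsmI with ⟨h, _⟩; intro he; simp at h; linarith
  have hsm2 : 1 - sm ≠ 0 := by rcases hsmI with ⟨_, h⟩; intro he; linarith
  refine ⟨hspI, hsmI, ?_, ?_, ?_⟩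
  · intro s hs
    simp only [Set.mem_insert_iff, Set.mem_singleton_iff] at hs
    rcases hs with rfl | rfl
    · exact stat _ hspI hqp
    · exact stat _ hsmI hqm
  · intro s
    constructor
    · intro h
      have hfac : 4 * α * (s * (4 * α * s ^ 2 - 2 * α * s + 9 - 2 * α))
          = 4 * α * (4 * α * (s * ((s - sp) * (s - sm)))) := by
        linear_combination (4 * α * s ^ 2 - 4 * α * s * sm) * hsp'
          + (4 * α * s ^ 2 - s * (α + 3 * d)) * hsm' + 9 * s * hd2
      have h' : 4 * α * (s * ((s - sp) * (s - sm))) = 0 := by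
        have := hfac.symm.trans (by rw [h, mul_zero])
        rcases mul_eq_zero.mp this with h'' | h''
        · exact absurd h'' (by positivity)
        · exact h''
      rcases mul_eq_zero.mp h' with h'' | h''
      · exact absurd h'' (by positivity)
      rcases mul_eq_zero.mp h'' with h'' | h''
      · exact Or.inl h''
      rcases mul_eq_zero.mp h'' with h'' | h''
      · exact Or.inr (Or.inl (by linarith))
      · exact Or.inr (Or.inr (by linarith))
    · rintro (rfl | rfl | rfl)
      · ring
      · rw [hqp]; ring
      · rw [hqm]; ring
  · intro s hs
    simp only [Set.mem_insert_iff, Set.mem_singleton_iff] at hs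
    rcases hs with rfl | rfl | rfl
    · exact lag 0 (by norm_num) (by norm_num) (by ring)
    · exact lag _ hsp1 hsp2 (by rw [hqp]; ring)
    · exact lag _ hsm1 hsm2 (by rw [hqm]; ring)
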